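/- Let N ≥ 1 and let z_1, …, z_N be pairwise distinct elements of a field of characteristic zero. Then the sum over all ordered triples (i,j,k) of pairwise distinct indices of z_i^2/((z_i - z_j)(z_i - z_k)) equals N(N-1)(N-2)/3. -/

import Mathlib

lemma key_alg {F : Type*} [Field F] {a b c : F} (hab : a ≠ b) (hbc : b ≠ c) (hac : a ≠ c) :
    a^2/((a-b)*(a-c)) + b^2/((b-c)*(b-a)) + c^2/((c-a)*(c-b)) = 1 := by
  have h1 : a - b ≠ 0 := sub_ne_zero.mpr hab
  have h2 : b - c ≠ 0 := sub_ne_zero.mpr hbc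
  have h3 : a - c ≠ 0 := sub_ne_zero.mpr hac
  have h4 : b - a ≠ 0 := sub_ne_zero.mpr hab.symm
  have h5 : c - a ≠ 0 := sub_ne_zero.mpr hac.symm
  have h6 : c - b ≠ 0 := sub_ne_zero.mpr hbc.symm
  field_simp
  ring

lemma count_lemma {F : Type*} [Field F] [CharZero F] {N : ℕ} :
    ∑ i : Fin N, ∑ j : Fin N, ∑ k : Fin N,
      (if i ≠ j ∧ j ≠ k ∧ i ≠ k then (1:F) else 0) =
      (N : F) * ((N : F) - 1) * ((N : F) - 2) := by
  have inner : ∀ i j : Fin N, i ≠ j →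
      ∑ k : Fin N, (if i ≠ j ∧ j ≠ k ∧ i ≠ k then (1:F) else 0) = (N:F) - 2 := by
    intro i j hij
    have hN2 : 2 ≤ N := by
      have := Fintype.one_lt_card_iff.mpr ⟨i, j, hij⟩
      simp at this; omega
    have hfe : Finset.univ.filter (fun k : Fin N => i ≠ j ∧ j ≠ k ∧ i ≠ k)
        = Finset.univ \ {j, i} := by
      ext k
      simp [hij, ne_comm, eq_comm, and_comm]
    rw [Finset.sum_boole, hfe, Finset.card_sdiff_of_subset (Finset.subset_univ _)]
    have hc : ({j, i} : Finset (Fin N)).card = 2 := by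
      rw [Finset.card_insert_of_notMem (by simp [hij.symm]), Finset.card_singleton]
    rw [hc]
    simp only [Finset.card_univ, Fintype.card_fin]
    push_cast [Nat.cast_sub hN2]
    ring
  have mid : ∀ i : Fin N,
      ∑ j : Fin N, ∑ k : Fin N, (if i ≠ j ∧ j ≠ k ∧ i ≠ k then (1:F) else 0)
      = ((N:F) - 1) * ((N:F) - 2) := by
    intro i
    have : ∀ j : Fin N, ∑ k : Fin N, (if i ≠ j ∧ j ≠ k ∧ i ≠ k then (1:F) else 0)
        = if i ≠ j then (N:F) - 2 else 0 := by
      intro j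
      by_cases h : i = j
      · simp [h]
      · simp only [if_pos h, inner i j h]
    rw [Finset.sum_congr rfl (fun j _ => this j)]
    have : ∀ j : Fin N, (if i ≠ j then (N:F) - 2 else 0)
        = ((N:F) - 2) - (if i = j then (N:F) - 2 else 0) := by
      intro j; by_cases h : i = j <;> simp [h]
    rw [Finset.sum_congr rfl (fun j _ => this j), Finset.sum_sub_distrib]
    simp [Finset.sum_ite_eq, mul_comm]
    ring
  rw [Finset.sum_congr rfl (fun i _ => mid i), Finset.sum_const]
  simp [Finset.card_univ, mul_assoc]

theorem triple_sum_z_sq {F : Type*} [Field F] [CharZero F] {N : ℕ} (hN : 1 ≤ N)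
    (z : Fin N → F) (hz : Function.Injective z) :
    ∑ i : Fin N, ∑ j : Fin N, ∑ k : Fin N,
      (if i ≠ j ∧ j ≠ k ∧ i ≠ k then z i ^ 2 / ((z i - z j) * (z i - z k)) else 0) =
      (N : F) * ((N : F) - 1) * ((N : F) - 2) / 3 := by
  set T : Fin N → Fin N → Fin N → F := fun i j k =>
    if i ≠ j ∧ j ≠ k ∧ i ≠ k then z i ^ 2 / ((z i - z j) * (z i - z k)) else 0 with hT
  show (∑ i : Fin N, ∑ j : Fin N, ∑ k : Fin N, T i j k) = _
  set S : F := ∑ i : Fin N, ∑ j : Fin N, ∑ k : Fin N, T i j k with hS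
  have rot1 : S = ∑ i : Fin N, ∑ j : Fin N, ∑ k : Fin N, T j k i := by
    have step1 : (∑ i : Fin N, ∑ j : Fin N, ∑ k : Fin N, T j k i)
        = ∑ j : Fin N, ∑ i : Fin N, ∑ k : Fin N, T j k i := Finset.sum_comm
    have step2 : (∑ j : Fin N, ∑ i : Fin N, ∑ k : Fin N, T j k i)
        = ∑ j : Fin N, ∑ k : Fin N, ∑ i : Fin N, T j k i :=
      Finset.sum_congr rfl fun j _ => Finset.sum_comm
    rw [step1, step2, hS]
  have rot2 : S = ∑ i : Fin N, ∑ j : Fin N, ∑ k : Fin N, T k i j := by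
    have step1 : (∑ i : Fin N, ∑ j : Fin N, ∑ k : Fin N, T k i j)
        = ∑ i : Fin N, ∑ k : Fin N, ∑ j : Fin N, T k i j :=
      Finset.sum_congr rfl fun i _ => Finset.sum_comm
    have step2 : (∑ i : Fin N, ∑ k : Fin N, ∑ j : Fin N, T k i j)
        = ∑ k : Fin N, ∑ i : Fin N, ∑ j : Fin N, T k i j := Finset.sum_comm
    rw [step1, step2, hS]
  have pointwise : ∀ i j k : Fin N, T i j k + T j k i + T k i j =
      (if i ≠ j ∧ j ≠ k ∧ i ≠ k then (1:F) else 0) := by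
    intro i j k
    by_cases h : i ≠ j ∧ j ≠ k ∧ i ≠ k
    · obtain ⟨h1, h2, h3⟩ := h
      have c2 : j ≠ k ∧ k ≠ i ∧ j ≠ i := ⟨h2, h3.symm, h1.symm⟩
      have c3 : k ≠ i ∧ i ≠ j ∧ k ≠ j := ⟨h3.symm, h1, h2.symm⟩
      simp only [hT, if_pos (⟨h1, h2, h3⟩ : i ≠ j ∧ j ≠ k ∧ i ≠ k), if_pos c2, if_pos c3]
      exact key_alg (hz.ne h1) (hz.ne h2) (hz.ne h3)
    · have h2 : ¬(j ≠ k ∧ k ≠ i ∧ j ≠ i) := by tauto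
      have h3 : ¬(k ≠ i ∧ i ≠ j ∧ k ≠ j) := by tauto
      simp [hT, h, h2, h3]
  have h3S : S + S + S = (N : F) * ((N : F) - 1) * ((N : F) - 2) := by
    nth_rewrite 2 [rot1]
    nth_rewrite 2 [rot2]
    rw [hS]
    simp only [← Finset.sum_add_distrib]
    rw [Finset.sum_congr rfl fun i _ => Finset.sum_congr rfl fun j _ =>
      Finset.sum_congr rfl fun k _ => pointwise i j k]
    exact count_lemma
  have h3 : (3:F) ≠ 0 := three_ne_zero
  rw [eq_div_iff h3]
  linear_combination h3S
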